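/- Every affine semigroup (finitely generated submonoid of ℕ^n) is an extraction monoid: for any nonzero x,y in M, the extraction grade λ_M(x,y) = sup{m/n : mx ≤_M ny, m,n ∈ ℕ, n ≠ 0} is a rational number attained by some pair (m,n) with mx ≤_M ny. -/

import Mathlib

open scoped ENNReal

/-- `x ≤_M y` inside the submonoid `M` of `ℕ^d`. -/
def SDvd {d : ℕ} (M : AddSubmonoid (Fin d → ℕ)) (x y : Fin d → ℕ) : Prop :=
  ∃ z ∈ M, y = x + z

/-- The extraction grade `λ_M(x,y) = sup { m/n : m • x ≤_M n • y, n ≠ 0 }`,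
valued in `ℝ≥0∞`. -/
noncomputable def extractionGrade {d : ℕ} (M : AddSubmonoid (Fin d → ℕ))
    (x y : Fin d → ℕ) : ℝ≥0∞ :=
  sSup {r : ℝ≥0∞ | ∃ m n : ℕ, 0 < n ∧ r = (m : ℝ≥0∞) / (n : ℝ≥0∞) ∧
    SDvd M (m • x) (n • y)}

set_option maxHeartbeats 1000000

/-- membership in the ℚ-cone generated by a finite family. -/
def InCone {d k : ℕ} (a : Fin k → Fin d → ℚ) (z : Fin d → ℚ) : Prop :=
  ∃ c : Fin k → ℚ, (∀ i, 0 ≤ c i) ∧ z = ∑ i, c i • a i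

lemma inCone_nonneg {d k : ℕ} {a : Fin k → Fin d → ℚ} (ha : ∀ i j, 0 ≤ a i j)
    {z : Fin d → ℚ} (hz : InCone a z) : ∀ j, 0 ≤ z j := by
  obtain ⟨c, hc, rfl⟩ := hz
  intro j
  rw [Finset.sum_apply]
  exact Finset.sum_nonneg fun i _ => mul_nonneg (hc i) (ha i j)

lemma inCone_smul {d k : ℕ} {a : Fin k → Fin d → ℚ} {q : ℚ} (hq : 0 ≤ q)
    {z : Fin d → ℚ} (hz : InCone a z) : InCone a (q • z) := by
  obtain ⟨c, hc, rfl⟩ := hz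
  exact ⟨fun i => q * c i, fun i => mul_nonneg hq (hc i),
    by rw [Finset.smul_sum]; exact Finset.sum_congr rfl fun i _ => (mul_smul q (c i) (a i)).symm⟩

/-- extension: membership in a reduced cone implies membership in the full cone. -/
lemma inCone_of_reduced {d k : ℕ} {a : Fin (k+1) → Fin d → ℚ} {j : Fin (k+1)}
    {z : Fin d → ℚ} (hz : InCone (a ∘ j.succAbove) z) : InCone a z := by
  obtain ⟨c, hc, rfl⟩ := hz
  refine ⟨j.insertNth 0 c, ?_, ?_⟩
  · intro i
    rcases eq_or_ne i j with rfl | h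
    · simp
    · obtain ⟨i', rfl⟩ := Fin.exists_succAbove_eq h
      simpa using hc i'
  · rw [Fin.sum_univ_succAbove _ j]
    simp

/-- reduction: if the generators are linearly dependent, any cone element lies in a
cone with one generator removed. -/
lemma cone_reduce {d k : ℕ} {a : Fin (k+1) → Fin d → ℚ} (hli : ¬ LinearIndependent ℚ a)
    {z : Fin d → ℚ} (hz : InCone a z) : ∃ j : Fin (k+1), InCone (a ∘ j.succAbove) z := by
  obtain ⟨c, hc, rfl⟩ := hz
  obtain ⟨g, hg0, i₀, hgi₀⟩ := Fintype.not_linearIndependent_iff.mp hli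
  -- wlog some coordinate of the relation is positive
  obtain ⟨r, hr0, i₁, hri₁⟩ : ∃ r : Fin (k+1) → ℚ, (∑ i, r i • a i = 0) ∧ ∃ i, 0 < r i := by
    rcases lt_or_ge 0 (g i₀) with h | h
    · exact ⟨g, hg0, i₀, h⟩
    · refine ⟨-g, by simp [hg0], i₀, ?_⟩
      simpa using lt_of_le_of_ne h hgi₀
  set Q : Finset (Fin (k+1)) := Finset.univ.filter (fun i => 0 < r i) with hQ
  have hQne : Q.Nonempty := ⟨i₁, by simp [hQ, hri₁]⟩
  set θ : ℚ := Q.inf' hQne (fun i => c i / r i) with hθ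
  have hθ0 : 0 ≤ θ := by
    apply Finset.le_inf'
    intro i hi
    have : 0 < r i := by simpa [hQ] using hi
    exact div_nonneg (hc i) this.le
  obtain ⟨j, hjQ, hjeq⟩ := Finset.exists_mem_eq_inf' hQne (fun i => c i / r i)
  have hrj : 0 < r j := by simpa [hQ] using hjQ
  set c' : Fin (k+1) → ℚ := fun i => c i - θ * r i with hc'
  have hc'0 : ∀ i, 0 ≤ c' i := by
    intro i
    rcases lt_or_ge 0 (r i) with h | h
    · have : θ ≤ c i / r i := Finset.inf'_le _ (by simp [hQ, h])
      have := (le_div_iff₀ h).mp this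
      simp only [hc']; linarith [hc i]
    · have : θ * r i ≤ 0 := mul_nonpos_of_nonneg_of_nonpos hθ0 h
      simp only [hc']; linarith [hc i]
  have hc'j : c' j = 0 := by
    have hθj : θ = c j / r j := hjeq
    simp only [hc', hθj]
    field_simp
    ring
  have hsum : ∑ i, c' i • a i = ∑ i, c i • a i := by
    simp only [hc', sub_smul, mul_smul, Finset.sum_sub_distrib, ← Finset.smul_sum, hr0,
      smul_zero, sub_zero]
  refine ⟨j, fun i => c' (j.succAbove i), fun i => hc'0 _, ?_⟩
  rw [← hsum, Fin.sum_univ_succAbove _ j, hc'j, zero_smul, zero_add]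
  rfl

/-- Base case: maximizing `t` with `y - t•x` in a cone with independent generators. -/
lemma cone_max_indep {d k : ℕ} {a : Fin k → Fin d → ℚ} (hli : LinearIndependent ℚ a)
    (ha : ∀ i j, 0 ≤ a i j) {x y : Fin d → ℚ} (hx0 : ∀ j, 0 ≤ x j)
    {j0 : Fin d} (hj0 : 0 < x j0)
    (hne : ∃ u : ℚ, 0 ≤ u ∧ InCone a (y - u • x)) :
    ∃ t : ℚ, 0 ≤ t ∧ InCone a (y - t • x) ∧
      ∀ u : ℚ, 0 ≤ u → InCone a (y - u • x) → u ≤ t := by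
  classical
  have hbd : ∀ u : ℚ, 0 ≤ u → InCone a (y - u • x) → u ≤ y j0 / x j0 := by
    intro u hu hin
    have h := inCone_nonneg ha hin j0
    simp only [Pi.sub_apply, Pi.smul_apply, smul_eq_mul] at h
    rw [le_div_iff₀ hj0]; linarith
  obtain ⟨t1, ht1, c1, hc1, hrep1⟩ := hne
  by_cases h2 : ∃ t2 : ℚ, (0 ≤ t2 ∧ InCone a (y - t2 • x)) ∧ t2 ≠ t1
  · obtain ⟨t2, ⟨ht2, c2, hc2, hrep2⟩, hne12⟩ := h2
    have hδ : t2 - t1 ≠ 0 := sub_ne_zero.mpr hne12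
    set δ : ℚ := t2 - t1 with hδdef
    set β : Fin k → ℚ := fun i => (c2 i - c1 i) / δ with hβ
    set α : Fin k → ℚ := fun i => c1 i - t1 * β i with hα
    have hαt1 : ∀ i, α i + t1 * β i = c1 i := by intro i; simp only [hα]; ring
    have claim1 : ∀ t : ℚ, (∑ i, (α i + t * β i) • a i) = y - t • x := by
      intro t
      have e1 : ∀ i, (α i + t * β i) • a i
          = c1 i • a i + ((t - t1) / δ) • ((c2 i - c1 i) • a i) := by
        intro i
        rw [smul_smul, ← add_smul]
        congr 1
        simp only [hα, hβ]
        field_simp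
        ring
      rw [Finset.sum_congr rfl fun i _ => e1 i, Finset.sum_add_distrib, ← Finset.smul_sum]
      have e2 : ∑ i, (c2 i - c1 i) • a i = (y - t2 • x) - (y - t1 • x) := by
        simp only [sub_smul, Finset.sum_sub_distrib, ← hrep1, ← hrep2]
      rw [e2, ← hrep1]
      funext j
      simp only [Pi.add_apply, Pi.sub_apply, Pi.smul_apply, smul_eq_mul]
      field_simp
      ring
    have claim2 : ∀ (t : ℚ) (c : Fin k → ℚ), y - t • x = ∑ i, c i • a i →
        ∀ i, c i = α i + t * β i := by
      intro t c hrep i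
      have h0 : ∑ i, (c i - (α i + t * β i)) • a i = 0 := by
        simp only [sub_smul, Finset.sum_sub_distrib, ← hrep, claim1 t, sub_self]
      have := Fintype.linearIndependent_iff.mp hli _ h0 i
      linarith
    set P : Finset (Fin k) := Finset.univ.filter (fun i => β i < 0) with hP
    have hPne : P.Nonempty := by
      by_contra hPe
      have hβ0 : ∀ i, 0 ≤ β i := by
        intro i
        by_contra h
        push_neg at h
        exact hPe ⟨i, Finset.mem_filter.mpr ⟨Finset.mem_univ _, h⟩⟩
      set u' : ℚ := max t1 (y j0 / x j0 + 1) with hu'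
      have hu'1 : t1 ≤ u' := le_max_left _ _
      have hu'2 : y j0 / x j0 + 1 ≤ u' := le_max_right _ _
      have hu'0 : 0 ≤ u' := le_trans ht1 hu'1
      have hfe : InCone a (y - u' • x) := by
        refine ⟨fun i => α i + u' * β i, fun i => ?_, (claim1 u').symm⟩
        show 0 ≤ α i + u' * β i
        have h1 := mul_nonneg (sub_nonneg.2 hu'1) (hβ0 i)
        have h2 := hαt1 i
        have h3 := hc1 i
        nlinarith
      have hle := hbd u' hu'0 hfe
      linarith
    set tstar : ℚ := P.inf' hPne (fun i => α i / (-β i)) with htstar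
    have hmax : ∀ u : ℚ, 0 ≤ u → InCone a (y - u • x) → u ≤ tstar := by
      rintro u hu ⟨c, hc, hrep⟩
      rw [htstar]
      refine Finset.le_inf' hPne _ (fun i hi => ?_)
      have hβi : β i < 0 := by simpa [hP] using hi
      have hci := claim2 u c hrep i
      have h0 : 0 ≤ α i + u * β i := hci ▸ hc i
      rw [le_div_iff₀ (by linarith : (0:ℚ) < -β i)]
      nlinarith
    have ht1t : t1 ≤ tstar := hmax t1 ht1 ⟨c1, hc1, hrep1⟩
    have htstar0 : 0 ≤ tstar := le_trans ht1 ht1t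
    have hfeas : ∀ i, 0 ≤ α i + tstar * β i := by
      intro i
      rcases lt_or_ge (β i) 0 with h | h
      · have hle : tstar ≤ α i / (-β i) := by
          rw [htstar]
          exact Finset.inf'_le (fun i => α i / (-β i))
            (Finset.mem_filter.mpr ⟨Finset.mem_univ _, h⟩)
        rw [le_div_iff₀ (by linarith : (0:ℚ) < -β i)] at hle
        nlinarith
      · have h1 := mul_nonneg (sub_nonneg.2 ht1t) h
        have h2 := hαt1 i
        have h3 := hc1 i
        nlinarith
    exact ⟨tstar, htstar0, ⟨fun i => α i + tstar * β i, hfeas, (claim1 _).symm⟩, hmax⟩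
  · refine ⟨t1, ht1, ⟨c1, hc1, hrep1⟩, ?_⟩
    intro u hu hin
    rcases eq_or_ne u t1 with rfl | h
    · exact le_refl _
    · exact absurd ⟨u, ⟨hu, hin⟩, h⟩ h2

/-- Main attainment lemma: the sup of `t` with `y - t•x` in a f.g. cone of the
nonnegative orthant is attained. -/
lemma cone_max {d : ℕ} {x y : Fin d → ℚ} (hx0 : ∀ j, 0 ≤ x j) {j0 : Fin d}
    (hj0 : 0 < x j0) :
    ∀ (k : ℕ) (a : Fin k → Fin d → ℚ), (∀ i j, 0 ≤ a i j) →
    (∃ u : ℚ, 0 ≤ u ∧ InCone a (y - u • x)) →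
    ∃ t : ℚ, 0 ≤ t ∧ InCone a (y - t • x) ∧
      ∀ u : ℚ, 0 ≤ u → InCone a (y - u • x) → u ≤ t := by
  intro k
  induction k with
  | zero =>
    intro a ha hne
    exact cone_max_indep linearIndependent_empty_type ha hx0 hj0 hne
  | succ k ih =>
    intro a ha hne
    by_cases hli : LinearIndependent ℚ a
    · exact cone_max_indep hli ha hx0 hj0 hne
    · classical
      obtain ⟨u₀, hu₀, hin₀⟩ := hne
      set L : Fin (k+1) → Prop :=
        fun j => ∃ u : ℚ, 0 ≤ u ∧ InCone (a ∘ j.succAbove) (y - u • x) with hL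
      have hred : ∀ j, L j → ∃ t : ℚ, 0 ≤ t ∧ InCone (a ∘ j.succAbove) (y - t • x) ∧
          ∀ u : ℚ, 0 ≤ u → InCone (a ∘ j.succAbove) (y - u • x) → u ≤ t :=
        fun j hj => ih (a ∘ j.succAbove) (fun i j' => ha _ j') hj
      set f : Fin (k+1) → ℚ := fun j => if h : L j then (hred j h).choose else u₀ with hf
      have hmax : ∀ u : ℚ, 0 ≤ u → InCone a (y - u • x) →
          u ≤ Finset.univ.sup' Finset.univ_nonempty f := by
        intro u hu hin
        obtain ⟨j', hj'⟩ := cone_reduce hli hin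
        have hLj' : L j' := ⟨u, hu, hj'⟩
        have h1 : u ≤ (hred j' hLj').choose := (hred j' hLj').choose_spec.2.2 u hu hj'
        have h2 : f j' = (hred j' hLj').choose := dif_pos hLj'
        calc u ≤ f j' := by rw [h2]; exact h1
        _ ≤ _ := Finset.le_sup' f (Finset.mem_univ j')
      obtain ⟨j, hjmem, hjeq⟩ := Finset.exists_mem_eq_sup' Finset.univ_nonempty f
      have hfj : 0 ≤ f j ∧ InCone a (y - f j • x) := by
        by_cases h : L j
        · have h2 : f j = (hred j h).choose := dif_pos h
          have spec := (hred j h).choose_spec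
          rw [h2]
          exact ⟨spec.1, inCone_of_reduced spec.2.1⟩
        · have h2 : f j = u₀ := dif_neg h
          rw [h2]; exact ⟨hu₀, hin₀⟩
      refine ⟨Finset.univ.sup' Finset.univ_nonempty f, ?_, ?_, hmax⟩
      · rw [hjeq]; exact hfj.1
      · rw [hjeq]; exact hfj.2

lemma inCone_add {d k : ℕ} {a : Fin k → Fin d → ℚ} {z w : Fin d → ℚ}
    (hz : InCone a z) (hw : InCone a w) : InCone a (z + w) := by
  obtain ⟨c, hc, rfl⟩ := hz
  obtain ⟨c', hc', rfl⟩ := hw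
  exact ⟨fun i => c i + c' i, fun i => add_nonneg (hc i) (hc' i),
    by rw [← Finset.sum_add_distrib]; exact Finset.sum_congr rfl fun i _ => (add_smul _ _ _).symm⟩

/-- the coordinatewise embedding `ℕ^d → ℚ^d`. -/
def iota {d : ℕ} (v : Fin d → ℕ) : Fin d → ℚ := fun j => (v j : ℚ)

lemma iota_zero {d : ℕ} : iota (0 : Fin d → ℕ) = 0 := by funext j; simp [iota]

lemma iota_add {d : ℕ} (v w : Fin d → ℕ) : iota (v + w) = iota v + iota w := by
  funext j; simp [iota]

lemma iota_inj {d : ℕ} {v w : Fin d → ℕ} (h : iota v = iota w) : v = w := by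
  funext j
  have := congrFun h j
  simp only [iota] at this
  exact_mod_cast this

lemma mem_closure_inCone {d k : ℕ} (a : Fin k → Fin d → ℕ) {v : Fin d → ℕ}
    (hv : v ∈ AddSubmonoid.closure (Set.range a)) :
    InCone (fun i => iota (a i)) (iota v) := by
  induction hv using AddSubmonoid.closure_induction with
  | mem x hx =>
    obtain ⟨i, rfl⟩ := hx
    refine ⟨fun i' => if i' = i then 1 else 0, fun i' => by dsimp only; split <;> norm_num, ?_⟩
    simp [ite_smul]
  | zero => exact ⟨0, fun i => le_refl 0, by simp [iota_zero]⟩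
  | add x y hx hy ihx ihy => rw [iota_add]; exact inCone_add ihx ihy

lemma exists_nat_cast_mul (q : ℚ) (hq : 0 ≤ q) {N : ℕ} (hdvd : q.den ∣ N) :
    ∃ n : ℕ, (n : ℚ) = q * N := by
  obtain ⟨m, rfl⟩ := hdvd
  refine ⟨q.num.toNat * m, ?_⟩
  have h1 : (q.num.toNat : ℤ) = q.num := Int.toNat_of_nonneg (Rat.num_nonneg.mpr hq)
  have hden : ((q.den : ℚ)) ≠ 0 := by exact_mod_cast q.den_nz
  have h2 : (q.num : ℚ) = q * q.den := (div_eq_iff hden).mp (Rat.num_div_den q)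
  have h3 : ((q.num.toNat : ℕ) : ℚ) = (q.num : ℚ) := by rw [← h1]; norm_cast
  calc ((q.num.toNat * m : ℕ) : ℚ) = (q.num : ℚ) * m := by
        push_cast [h3]; ring
  _ = q * ((q.den * m : ℕ) : ℚ) := by push_cast; rw [h2]; ring

lemma inCone_scale {d k : ℕ} (a : Fin k → Fin d → ℕ) {z : Fin d → ℚ}
    (hz : InCone (fun i => iota (a i)) z) :
    ∃ N : ℕ, 0 < N ∧ ∃ w ∈ AddSubmonoid.closure (Set.range a),
      iota w = (N : ℚ) • z := by
  obtain ⟨c, hc, rfl⟩ := hz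
  set N := ∏ i, (c i).den with hNdef
  have hN : 0 < N := Finset.prod_pos fun i _ => (c i).pos
  choose n hn using fun i => exists_nat_cast_mul (c i) (hc i)
    (Finset.dvd_prod_of_mem (fun i => (c i).den) (Finset.mem_univ i))
  refine ⟨N, hN, ∑ i, n i • a i, ?_, ?_⟩
  · exact AddSubmonoid.sum_mem _ fun i _ =>
      AddSubmonoid.nsmul_mem _ (AddSubmonoid.subset_closure (Set.mem_range_self i)) _
  · funext j
    simp only [iota, Finset.sum_apply, Pi.smul_apply, smul_eq_mul]
    push_cast
    rw [Finset.mul_sum]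
    refine Finset.sum_congr rfl fun i _ => ?_
    rw [hn i]
    ring

lemma iota_nsmul {d : ℕ} (n : ℕ) (v : Fin d → ℕ) : iota (n • v) = (n : ℚ) • iota v := by
  funext j
  simp only [iota, Pi.smul_apply, smul_eq_mul]
  push_cast
  ring

lemma ennreal_div_le_div {m n p q : ℕ} (hn : 0 < n) (hq : 0 < q) (h : m * q ≤ p * n) :
    (m : ℝ≥0∞) / n ≤ (p : ℝ≥0∞) / q := by
  rw [ENNReal.div_le_iff (by exact_mod_cast hn.ne' : (n : ℝ≥0∞) ≠ 0)
      (ENNReal.natCast_ne_top n), div_eq_mul_inv, mul_right_comm, ← div_eq_mul_inv,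
    ENNReal.le_div_iff_mul_le (Or.inl (by exact_mod_cast hq.ne' : (q : ℝ≥0∞) ≠ 0))
      (Or.inl (ENNReal.natCast_ne_top q))]
  exact_mod_cast h

theorem affine_semigroup_is_extraction_monoid' {d : ℕ}
    (M : AddSubmonoid (Fin d → ℕ)) (hfg : M.FG) :
    ∀ x ∈ M, ∀ y ∈ M, x ≠ 0 → y ≠ 0 →
      ∃ m n : ℕ, 0 < n ∧ SDvd M (m • x) (n • y) ∧
        extractionGrade M x y = (m : ℝ≥0∞) / (n : ℝ≥0∞) := by
  intro x hx y hy hx0 hy0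
  obtain ⟨S, hS⟩ := hfg
  set k := S.card with hk
  set a : Fin k → (Fin d → ℕ) := fun i => (S.equivFin.symm i : Fin d → ℕ) with ha
  have hrange : Set.range a = (S : Set (Fin d → ℕ)) := by
    ext v
    constructor
    · rintro ⟨i, rfl⟩; exact (S.equivFin.symm i).2
    · intro hv; exact ⟨S.equivFin ⟨v, hv⟩, by simp [ha]⟩
  have hcl : AddSubmonoid.closure (Set.range a) = M := by rw [hrange, hS]
  set aQ : Fin k → Fin d → ℚ := fun i => iota (a i) with haQ
  have haQ0 : ∀ i j, 0 ≤ aQ i j := fun i j => Nat.cast_nonneg _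
  have hx0' : ∀ j, 0 ≤ iota x j := fun j => Nat.cast_nonneg _
  obtain ⟨j0, hj0'⟩ := Function.ne_iff.mp hx0
  have hj0'' : x j0 ≠ 0 := by simpa using hj0'
  have hj0 : 0 < iota x j0 := by
    simp only [iota]
    exact_mod_cast Nat.pos_of_ne_zero hj0''
  have hyC : InCone aQ (iota y) := mem_closure_inCone a (hcl ▸ hy)
  have hne : ∃ u : ℚ, 0 ≤ u ∧ InCone aQ (iota y - u • iota x) :=
    ⟨0, le_refl 0, by simpa using hyC⟩
  obtain ⟨t, ht0, htin, htmax⟩ := cone_max hx0' hj0 k aQ haQ0 hne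
  set p := t.num.toNat with hp
  set q := t.den with hq
  have hqpos : 0 < q := t.pos
  have hq0 : ((q : ℚ)) ≠ 0 := by exact_mod_cast hqpos.ne'
  have hnum : (t.num : ℚ) = t * q := (div_eq_iff hq0).mp (Rat.num_div_den t)
  have hptZ : (t.num.toNat : ℤ) = t.num := Int.toNat_of_nonneg (Rat.num_nonneg.mpr ht0)
  have hpt : (p : ℚ) = t * q := by
    rw [← hnum]
    exact_mod_cast congrArg (fun z : ℤ => (z : ℚ)) hptZ
  have hsc : InCone aQ ((q : ℚ) • iota y - (p : ℚ) • iota x) := by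
    have h1 := inCone_smul (q := (q : ℚ)) (Nat.cast_nonneg q) htin
    have heq : (q : ℚ) • (iota y - t • iota x)
        = (q : ℚ) • iota y - (p : ℚ) • iota x := by
      rw [smul_sub, smul_smul, show (q : ℚ) * t = (p : ℚ) by rw [hpt]; ring]
    rwa [heq] at h1
  obtain ⟨N, hN, w, hwM, hw⟩ := inCone_scale a hsc
  have hsdvd : SDvd M ((N * p) • x) ((N * q) • y) := by
    refine ⟨w, hcl ▸ hwM, ?_⟩
    apply iota_inj
    rw [iota_add, iota_nsmul, iota_nsmul, hw]
    have h2 : (N : ℚ) • ((q : ℚ) • iota y - (p : ℚ) • iota x)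
        = ((N * q : ℕ) : ℚ) • iota y - ((N * p : ℕ) : ℚ) • iota x := by
      rw [smul_sub, smul_smul, smul_smul]
      push_cast
      ring_nf
    rw [h2]
    abel
  refine ⟨N * p, N * q, Nat.mul_pos hN hqpos, hsdvd, ?_⟩
  have hgoal : extractionGrade M x y = ((N * p : ℕ) : ℝ≥0∞) / ((N * q : ℕ) : ℝ≥0∞) := by
    apply le_antisymm
    · apply sSup_le
      rintro r ⟨m', n', hn', rfl, hsd'⟩
      obtain ⟨z, hzM, hzeq⟩ := hsd'
      have hzC : InCone aQ (iota z) := mem_closure_inCone a (hcl ▸ hzM)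
      have hn'0 : ((n' : ℚ)) ≠ 0 := by exact_mod_cast hn'.ne'
      have h2 : iota z = (n' : ℚ) • iota y - (m' : ℚ) • iota x := by
        have h3 := congrArg iota hzeq
        rw [iota_nsmul, iota_add, iota_nsmul] at h3
        exact eq_sub_of_add_eq' h3.symm
      have hfeas' : InCone aQ (iota y - ((m' : ℚ) / (n' : ℚ)) • iota x) := by
        have h1 := inCone_smul (q := ((n' : ℚ))⁻¹) (by positivity) hzC
        have h3 : ((n' : ℚ))⁻¹ • ((n' : ℚ) • iota y - (m' : ℚ) • iota x)
            = iota y - ((m' : ℚ) / (n' : ℚ)) • iota x := by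
          rw [smul_sub, smul_smul, smul_smul, inv_mul_cancel₀ hn'0, one_smul,
            show (n' : ℚ)⁻¹ * (m' : ℚ) = (m' : ℚ) / (n' : ℚ) by rw [div_eq_mul_inv]; ring]
        rwa [h2, h3] at h1
      have hle : (m' : ℚ) / (n' : ℚ) ≤ t := htmax _ (by positivity) hfeas'
      have hkey : m' * q ≤ p * n' := by
        have hqQ : (0 : ℚ) < q := by exact_mod_cast hqpos
        have hnQ : (0 : ℚ) < n' := by exact_mod_cast hn'
        have hpq : (p : ℚ) / (q : ℚ) = t := (div_eq_iff hq0).mpr hpt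
        have h4 : (m' : ℚ) / (n' : ℚ) ≤ (p : ℚ) / (q : ℚ) := by rw [hpq]; exact hle
        have h5 := (div_le_div_iff₀ hnQ hqQ).mp h4
        exact_mod_cast h5
      have hkey2 : m' * (N * q) ≤ (N * p) * n' := by
        calc m' * (N * q) = N * (m' * q) := by ring
        _ ≤ N * (p * n') := Nat.mul_le_mul_left N hkey
        _ = (N * p) * n' := by ring
      exact ennreal_div_le_div hn' (Nat.mul_pos hN hqpos) hkey2
    · exact le_sSup ⟨N * p, N * q, Nat.mul_pos hN hqpos, rfl, hsdvd⟩
  exact_mod_cast hgoal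

/-- every affine semigroup (finitely generated submonoid of `ℕ^d`) is an
extraction monoid: for any nonzero `x, y ∈ M` the extraction grade is a rational value
`m / n` attained by some pair `(m, n)` with `m • x ≤_M n • y`. -/
theorem affine_semigroup_is_extraction_monoid {d : ℕ}
    (M : AddSubmonoid (Fin d → ℕ)) (hfg : M.FG) :
    ∀ x ∈ M, ∀ y ∈ M, x ≠ 0 → y ≠ 0 →
      ∃ m n : ℕ, 0 < n ∧ SDvd M (m • x) (n • y) ∧
        extractionGrade M x y = (m : ℝ≥0∞) / (n : ℝ≥0∞) := by
  exact affine_semigroup_is_extraction_monoid' M hfg
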